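/- There exists a real number α > 1 such that ‖α^n‖ ≤ 2^(−n) for infinitely many positive integers n, yet α^d is not a Pisot number for any positive integer d. -/

import Mathlib

/-- The distance from a real number to the nearest integer (denoted `‖x‖`). -/
noncomputable def nidist (x : ℝ) : ℝ := |x - round x|

/-- A Pisot number: a real algebraic integer `α > 1` all of whose Galois conjugates
different from `α` have complex absolute value strictly less than `1`. -/
def IsPisot (α : ℝ) : Prop :=
  1 < α ∧ IsIntegral ℤ α ∧
    ∀ β : ℂ, Polynomial.aeval β (minpoly ℚ α) = 0 → β ≠ (α : ℂ) → ‖β‖ < 1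

open Set Polynomial

/-- One refinement step of the nested-interval construction. -/
private lemma step_exists (a b x : ℝ) (N : ℕ) (ha : 2 ≤ a) (hab : a < b) :
    ∃ a' b' : ℝ, ∃ n : ℕ, N < n ∧ a ≤ a' ∧ a' < b' ∧ b' ≤ b ∧ x ∉ Set.Icc a' b' ∧
      ∀ α ∈ Set.Icc a' b', nidist (α ^ n) ≤ (2 : ℝ)⁻¹ ^ n := by
  have ha0 : (0 : ℝ) < a := by linarith
  have hba : 1 < b / a := (one_lt_div ha0).mpr hab
  obtain ⟨n0, hn0⟩ := pow_unbounded_of_one_lt (4 : ℝ) hba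
  set n : ℕ := max n0 (N + 1) with hn_def
  have hN : N < n := lt_of_lt_of_le (Nat.lt_succ_self N) (le_max_right _ _)
  have hn0' : n ≠ 0 := by positivity
  have h4 : (4 : ℝ) ≤ (b / a) ^ n :=
    le_trans hn0.le (pow_le_pow_right₀ hba.le (le_max_left _ _))
  have hapow1 : (1 : ℝ) ≤ a ^ n := by
    calc (1:ℝ) = 1 ^ n := (one_pow n).symm
    _ ≤ a ^ n := pow_le_pow_left₀ (by norm_num) (by linarith) n
  have hkey : a ^ n + 3 ≤ b ^ n := by
    have hdiv : (b / a) ^ n = b ^ n / a ^ n := div_pow b a n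
    have hpos : (0 : ℝ) < a ^ n := by positivity
    have h4' : 4 * a ^ n ≤ b ^ n := by
      rw [hdiv] at h4
      calc 4 * a ^ n ≤ (b ^ n / a ^ n) * a ^ n := by nlinarith
      _ = b ^ n := by field_simp
    nlinarith
  set m : ℤ := ⌊a ^ n⌋ + 1 with hm_def
  have hm1 : a ^ n < (m : ℝ) := by rw [hm_def]; push_cast; exact Int.lt_floor_add_one _
  have hm1' : (m : ℝ) ≤ a ^ n + 1 := by
    rw [hm_def]; push_cast
    have := Int.floor_le (a ^ n); linarith
  have hm2 : (m : ℝ) + 1 ≤ b ^ n := by linarith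
  have hmpos : (0 : ℝ) < (m : ℝ) := by positivity
  set ε : ℝ := (2 : ℝ)⁻¹ ^ n with hε_def
  have hε : 0 < ε := by positivity
  have hε1 : ε ≤ 1 := by
    rw [hε_def]
    exact pow_le_one₀ (by norm_num) (by norm_num)
  set a₁ : ℝ := (m : ℝ) ^ ((n : ℝ)⁻¹) with ha₁_def
  set b₁ : ℝ := ((m : ℝ) + ε) ^ ((n : ℝ)⁻¹) with hb₁_def
  have ha₁nn : 0 ≤ a₁ := Real.rpow_nonneg hmpos.le _
  have hb₁nn : 0 ≤ b₁ := Real.rpow_nonneg (by linarith) _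
  have pa : a₁ ^ n = (m : ℝ) := Real.rpow_inv_natCast_pow hmpos.le hn0'
  have pb : b₁ ^ n = (m : ℝ) + ε := Real.rpow_inv_natCast_pow (by linarith) hn0'
  have ha₁ : a ≤ a₁ := by
    rw [← pow_le_pow_iff_left₀ ha0.le ha₁nn hn0', pa]; exact hm1.le
  have hb₁ : b₁ ≤ b := by
    rw [← pow_le_pow_iff_left₀ hb₁nn (by linarith : (0:ℝ) ≤ b) hn0', pb]; linarith
  have hab₁ : a₁ < b₁ := by
    rw [← pow_lt_pow_iff_left₀ ha₁nn hb₁nn hn0', pa, pb]; linarith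
  have hprop : ∀ α ∈ Set.Icc a₁ b₁, nidist (α ^ n) ≤ (2 : ℝ)⁻¹ ^ n := by
    intro α hα
    have hαnn : 0 ≤ α := le_trans ha₁nn hα.1
    have h1 : (m : ℝ) ≤ α ^ n := by rw [← pa]; exact pow_le_pow_left₀ ha₁nn hα.1 n
    have h2 : α ^ n ≤ (m : ℝ) + ε := by rw [← pb]; exact pow_le_pow_left₀ hαnn hα.2 n
    have := round_le (α ^ n) m
    have habs : |α ^ n - (m : ℝ)| ≤ ε := by rw [abs_of_nonneg (by linarith)]; linarith
    exact le_trans this (by rw [hε_def] at habs; exact habs)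
  -- now avoid x by taking one of two thirds of the interval
  set L : ℝ := b₁ - a₁ with hL_def
  have hL : 0 < L := by linarith
  by_cases hx : x ∈ Set.Icc (b₁ - L / 3) b₁
  · refine ⟨a₁, a₁ + L / 3, n, hN, ha₁, by linarith, by linarith, ?_, ?_⟩
    · intro hmem
      have := hmem.2
      have := hx.1
      linarith
    · intro α hα
      exact hprop α ⟨hα.1, by linarith [hα.2]⟩
  · refine ⟨b₁ - L / 3, b₁, n, hN, by linarith, by linarith, hb₁, hx, ?_⟩
    intro α hα
    exact hprop α ⟨by linarith [hα.1], hα.2⟩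

private structure NIState where
  a : ℝ
  b : ℝ
  n : ℕ
  ha : 2 ≤ a
  hab : a < b

private def NIStep (x : ℝ) (s t : NIState) : Prop :=
  s.n < t.n ∧ s.a ≤ t.a ∧ t.b ≤ s.b ∧ x ∉ Set.Icc t.a t.b ∧
    ∀ α ∈ Set.Icc t.a t.b, nidist (α ^ t.n) ≤ (2 : ℝ)⁻¹ ^ t.n

private lemma exists_step (x : ℝ) (s : NIState) : ∃ t, NIStep x s t := by
  obtain ⟨a', b', n, h1, h2, h3, h4, h5, h6⟩ := step_exists s.a s.b x s.n s.ha s.hab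
  exact ⟨⟨a', b', n, le_trans s.ha h2, h3⟩, h1, h2, h4, h5, h6⟩

private noncomputable def niseq (e : ℕ → ℝ) : ℕ → NIState
  | 0 => ⟨2, 3, 0, le_refl 2, by norm_num⟩
  | k + 1 => (exists_step (e k) (niseq e k)).choose

private lemma niseq_spec (e : ℕ → ℝ) (k : ℕ) :
    NIStep (e k) (niseq e k) (niseq e (k + 1)) :=
  (exists_step (e k) (niseq e k)).choose_spec

theorem exists_real_small_fractional_parts_no_pisot_power :
    ∃ α : ℝ, 1 < α ∧ {n : ℕ | 0 < n ∧ nidist (α ^ n) ≤ (2 : ℝ)⁻¹ ^ n}.Infinite ∧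
      ∀ d : ℕ, 0 < d → ¬ IsPisot (α ^ d) := by
  -- enumerate the (countably many) algebraic real numbers
  have hcnt : Set.Countable { x : ℝ | IsAlgebraic ℚ x } := Algebraic.countable ℚ ℝ
  have hne : { x : ℝ | IsAlgebraic ℚ x }.Nonempty := ⟨0, isAlgebraic_zero⟩
  obtain ⟨e, he⟩ := hcnt.exists_eq_range hne
  -- basic monotonicity facts about the nested intervals
  have aMono : Monotone fun k => (niseq e k).a :=
    monotone_nat_of_le_succ fun k => (niseq_spec e k).2.1
  have bAnti : Antitone fun k => (niseq e k).b :=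
    antitone_nat_of_succ_le fun k => (niseq_spec e k).2.2.1
  have a_le_b : ∀ j k, (niseq e j).a ≤ (niseq e k).b := by
    intro j k
    rcases le_total j k with h | h
    · exact le_trans (aMono h) (niseq e k).hab.le
    · exact le_trans (niseq e j).hab.le (bAnti h)
  have hbdd : BddAbove (Set.range fun k => (niseq e k).a) :=
    ⟨(niseq e 0).b, by rintro _ ⟨j, rfl⟩; exact a_le_b j 0⟩
  set α : ℝ := ⨆ k, (niseq e k).a with hα_def
  have h_le : ∀ k, (niseq e k).a ≤ α := fun k => le_ciSup hbdd k
  have h_ge : ∀ k, α ≤ (niseq e k).b := fun k => ciSup_le fun j => a_le_b j k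
  have hmem : ∀ k, α ∈ Set.Icc (niseq e k).a (niseq e k).b := fun k => ⟨h_le k, h_ge k⟩
  have hα1 : 1 < α := lt_of_lt_of_le (by norm_num : (1:ℝ) < 2) (h_le 0)
  -- α is transcendental over ℚ
  have htrans : ¬ IsAlgebraic ℚ α := by
    intro halg
    have : α ∈ { x : ℝ | IsAlgebraic ℚ x } := halg
    rw [he] at this
    obtain ⟨k, hk⟩ := this
    exact (niseq_spec e k).2.2.2.1 (hk ▸ hmem (k + 1))
  refine ⟨α, hα1, ?_, ?_⟩
  · -- infinitely many n with small nidist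
    have nMono : StrictMono fun k => (niseq e k).n :=
      strictMono_nat_of_lt_succ fun k => (niseq_spec e k).1
    apply Set.infinite_of_injective_forall_mem
      (f := fun k : ℕ => (niseq e (k + 1)).n)
    · exact fun j k h => Nat.succ_injective (nMono.injective h)
    · intro k
      refine ⟨lt_of_le_of_lt (Nat.zero_le _) (niseq_spec e k).1, ?_⟩
      exact (niseq_spec e k).2.2.2.2 α (hmem (k + 1))
  · -- no power of α is Pisot
    intro d hd hpisot
    obtain ⟨p, pmonic, hp⟩ := hpisot.2.1
    apply htrans
    have hq : Polynomial.aeval (α ^ d) (p.map (algebraMap ℤ ℚ)) = 0 := by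
      rw [Polynomial.aeval_map_algebraMap]
      exact hp
    have hqne : p.map (algebraMap ℤ ℚ) ≠ 0 := (pmonic.map _).ne_zero
    refine ⟨Polynomial.expand ℚ d (p.map (algebraMap ℤ ℚ)), ?_, ?_⟩
    · exact (Polynomial.expand_ne_zero hd).mpr hqne
    · rw [Polynomial.expand_aeval]
      exact hq
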